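/- Define v : ℕ → ℝ by v 1 = v₁ for some real v₁ > 1 large enough that all iterates exceed 1, with vₙ = (vₙ₋₁ − 1/vₙ₋₁)/2. If vₙ > 1 for all 1 ≤ n ≤ k, then 2^{k−1}·arctan(1/v₁) = arctan(1/v_k). -/
import Mathlib

lemma key_step (x : ℝ) (hx : 1 < x) :
    2 * Real.arctan (1 / x) = Real.arctan (1 / ((x - 1 / x) / 2)) := by
  have hx0 : 0 < x := by linarith
  have h : (1 / x) * (1 / x) < 1 := by
    rw [div_mul_div_comm, div_lt_one (by positivity)]
    nlinarith
  have := Real.arctan_add h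
  rw [two_mul, this]
  congr 1
  have hxx : x * x - 1 > 0 := by nlinarith
  field_simp
  ring

theorem arctan_iteration (v : ℕ → ℝ) (k : ℕ) (hk : 1 ≤ k)
    (hrec : ∀ n, v (n + 1) = (v n - 1 / v n) / 2)
    (hpos : ∀ n, 1 ≤ n → n ≤ k → 1 < v n) :
    2 ^ (k - 1) * Real.arctan (1 / v 1) = Real.arctan (1 / v k) := by
  induction k with
  | zero => omega
  | succ m ih =>
    rcases Nat.eq_or_lt_of_le hk with h1 | h1
    · simp [← h1]
    · have hm : 1 ≤ m := by omega
      have heq := ih hm (fun n hn hnm => hpos n hn (by omega))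
      have hvm : 1 < v m := hpos m hm (by omega)
      have : Real.arctan (1 / v (m + 1)) = 2 * Real.arctan (1 / v m) := by
        rw [hrec m, key_step (v m) hvm]
      rw [this, ← heq]
      have : m + 1 - 1 = (m - 1) + 1 := by omega
      rw [this, pow_succ]
      ring
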